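/- Let (M,<) be an ordered matroid and C a circuit with broken circuit Ĉ. If B̂ is the lexicographically smallest basis containing Ĉ, then IP(B̂) = Ĉ. -/

import Mathlib

open Finset

/-- The set `IP(B)` of internally passive elements of `B`: elements `b ∈ B` that can be
exchanged for a strictly smaller element to obtain another base. -/
noncomputable def IP {α : Type*} [DecidableEq α] [LinearOrder α] (M : Matroid α)
    (B : Finset α) : Finset α := by
  classical
  exact B.filter fun b => ∃ b', b' < b ∧ M.IsBase ((insert b' (B.erase b) : Finset α) : Set α)

/-- `C` is a circuit of `M`: a minimal dependent subset of the ground set. -/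
def IsCircuitF {α : Type*} [DecidableEq α] (M : Matroid α) (C : Finset α) : Prop :=
  ↑C ⊆ M.E ∧ ¬M.Indep ↑C ∧ ∀ x ∈ C, M.Indep ↑(C.erase x)

/-- The lexicographic (strict) order on finsets induced by the linear order on the
ground set: at the smallest element where `A` and `B` differ, `A` has it. -/
def lexLT {α : Type*} [LinearOrder α] (A B : Finset α) : Prop :=
  ∃ x ∈ A, x ∉ B ∧ ∀ y, y < x → (y ∈ A ↔ y ∈ B)

/-- If `Bhat` is the lexicographically smallest base containing the broken circuit
`Ĉ = C \ {min C}`, then `IP(Bhat) = Ĉ`. -/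
theorem IP_lexMin_base {α : Type*} [DecidableEq α] [LinearOrder α] (M : Matroid α)
    (C Bhat : Finset α) (hC : IsCircuitF M C) (hCne : C.Nonempty)
    (hBhat : M.IsBase ↑Bhat) (hsub : C.erase (C.min' hCne) ⊆ Bhat)
    (hmin : ∀ B : Finset α, M.IsBase ↑B → C.erase (C.min' hCne) ⊆ B →
      B = Bhat ∨ lexLT Bhat B) :
    IP M Bhat = C.erase (C.min' hCne) := by
  classical
  set m := C.min' hCne with hm
  have hmC : m ∈ C := C.min'_mem hCne
  have hCdep : M.Dep ↑C := ⟨hC.2.1, hC.1⟩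
  -- m ∉ Bhat
  have hmB : m ∉ Bhat := by
    intro hmem
    have hCB : (C : Finset α) ⊆ Bhat := by
      intro x hx
      by_cases hxm : x = m
      · subst hxm; exact hmem
      · exact hsub (Finset.mem_erase.2 ⟨hxm, hx⟩)
    exact hC.2.1 (hBhat.indep.subset (by exact_mod_cast Finset.coe_subset.2 hCB))
  -- every element of C is in the closure of the rest of C
  have hd_cl : ∀ d ∈ C, (d : α) ∈ M.closure ↑(C.erase d) := by
    intro d hd
    have hI : M.Indep ↑(C.erase d) := hC.2.2 d hd
    rw [hI.mem_closure_iff_of_notMem (by simp)]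
    have : (insert d ↑(C.erase d) : Set α) = ↑C := by
      rw [← Finset.coe_insert, Finset.insert_erase hd]
    rwa [this]
  ext b
  simp only [IP, Finset.mem_filter]
  constructor
  · -- IP ⊆ broken circuit
    rintro ⟨hbB, b', hb'lt, hb'base⟩
    by_contra hnot
    set B' : Finset α := insert b' (Bhat.erase b) with hB'
    have hbB' : b ∉ B' := by
      simp only [hB', Finset.mem_insert, Finset.mem_erase]
      push_neg
      exact ⟨(hb'lt.ne).symm, fun h _ => (h rfl).elim⟩
    have hb'B : b' ∉ Bhat := by
      intro hmem
      have hsub' : (B' : Set α) ⊆ ↑Bhat := by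
        intro x hx
        simp only [hB', Finset.coe_insert, Set.mem_insert_iff, Finset.coe_erase,
          Set.mem_diff] at hx
        rcases hx with rfl | ⟨hx, _⟩
        · exact hmem
        · exact hx
      have := hb'base.eq_of_subset_indep hBhat.indep hsub'
      exact hbB' (by exact_mod_cast this ▸ (Finset.mem_coe.2 hbB))
    have hCB' : C.erase m ⊆ B' := by
      intro x hx
      have hxB : x ∈ Bhat := hsub hx
      have hxb : x ≠ b := by rintro rfl; exact hnot hx
      exact Finset.mem_insert_of_mem (Finset.mem_erase.2 ⟨hxb, hxB⟩)
    rcases hmin B' hb'base hCB' with heq | hlex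
    · exact hb'B (heq ▸ Finset.mem_insert_self b' _)
    · obtain ⟨x, hxBhat, hxB', hlow⟩ := hlex
      have hxb : x = b := by
        by_contra hne
        exact hxB' (Finset.mem_insert_of_mem (Finset.mem_erase.2 ⟨hne, hxBhat⟩))
      subst hxb
      have := (hlow b' hb'lt).2 (Finset.mem_insert_self b' _)
      exact hb'B this
  · -- broken circuit ⊆ IP
    intro hb
    obtain ⟨hbm, hbC⟩ := Finset.mem_erase.1 hb
    have hbB : b ∈ Bhat := hsub hb
    have hmlt : m < b := lt_of_le_of_ne (C.min'_le b hbC) (Ne.symm hbm)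
    refine ⟨hbB, m, hmlt, ?_⟩
    -- show insert m (Bhat.erase b) is a base
    have hBdiff : M.Indep ((↑Bhat : Set α) \ {b}) :=
      hBhat.indep.subset Set.diff_subset
    have hmnot : m ∉ ((↑Bhat : Set α) \ {b}) := fun h => hmB (Finset.mem_coe.1 h.1)
    have hmcl : m ∉ M.closure ((↑Bhat : Set α) \ {b}) := by
      intro hmcl
      have hsub2 : (↑(C.erase b) : Set α) ⊆ insert m ((↑Bhat : Set α) \ {b}) := by
        intro x hx
        simp only [Finset.coe_erase, Set.mem_diff, Set.mem_singleton_iff] at hx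
        obtain ⟨hxC, hxb⟩ := hx
        by_cases hxm : x = m
        · rw [hxm]; exact Set.mem_insert _ _
        · refine Set.mem_insert_of_mem _ ⟨Finset.mem_coe.2 (hsub (Finset.mem_erase.2 ⟨hxm, hxC⟩)), hxb⟩
      have hins : (insert m ((↑Bhat : Set α) \ {b}) : Set α) ⊆
          M.closure ((↑Bhat : Set α) \ {b}) := by
        apply Set.insert_subset hmcl
        exact M.subset_closure _ (Set.diff_subset.trans hBhat.subset_ground)
      have hbcl : (b : α) ∈ M.closure ((↑Bhat : Set α) \ {b}) := by
        have h1 := hd_cl b hbC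
        have h2 := Matroid.closure_subset_closure_of_subset_closure
          (hsub2.trans hins) (M := M)
        exact h2 h1
      exact hBhat.indep.notMem_closure_diff_of_mem (Finset.mem_coe.2 hbB) hbcl
    have hmE : (m : α) ∈ M.E := hC.1 (Finset.mem_coe.2 hmC)
    have hIndep : M.Indep (insert m ((↑Bhat : Set α) \ {b})) := by
      rw [hBdiff.insert_indep_iff_of_notMem hmnot]
      exact ⟨hmE, hmcl⟩
    have hbase := hBhat.exchange_isBase_of_indep (f := m) (e := b)
      (fun h => hmB (Finset.mem_coe.1 h)) hIndep
    have hcoe : ((insert m (Bhat.erase b) : Finset α) : Set α) =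
        insert m ((↑Bhat : Set α) \ {b}) := by
      simp [Finset.coe_insert, Finset.coe_erase]
    rwa [hcoe]
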